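/- Let βγ > 1 and let d < Δ_c = (√(βγ)+1)/(√(βγ)−1) be a positive real. Then for every x > 0, (βx + 1)(x + γ) > d(βγ − 1)x. Consequently, for f_d(x) = λ((βx+1)/(x+γ))^d with any λ > 0, every fixed point x̂ of f_d satisfies f_d'(x̂) < 1. -/

import Mathlib

theorem stmt_7 (β γ d : ℝ) (hβ : 0 < β) (hγ : 0 < γ) (h1 : 1 < β * γ) (hd : 0 < d)
    (hdc : d < (Real.sqrt (β * γ) + 1) / (Real.sqrt (β * γ) - 1)) :
    (∀ x : ℝ, 0 < x → d * (β * γ - 1) * x < (β * x + 1) * (x + γ)) ∧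
    ∀ l : ℝ, 0 < l → ∀ xhat : ℝ, 0 < xhat →
      l * ((β * xhat + 1) / (xhat + γ)) ^ d = xhat →
      deriv (fun x : ℝ => l * ((β * x + 1) / (x + γ)) ^ d) xhat < 1 := by
  set s := Real.sqrt (β * γ) with hs
  have hs2 : s ^ 2 = β * γ := Real.sq_sqrt (by positivity)
  have hs0 : 0 ≤ s := Real.sqrt_nonneg _
  have hs1 : 1 < s := by nlinarith
  have hd' : d * (s - 1) < s + 1 := (lt_div_iff₀ (by linarith)).mp hdc
  have key : ∀ x : ℝ, 0 < x → d * (β * γ - 1) * x < (β * x + 1) * (x + γ) := by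
    intro x hx
    have h2' : 2 * s * x ≤ β * x ^ 2 + γ := by
      nlinarith [sq_nonneg (β * x - s), mul_pos hβ hx]
    have h3 : 0 < (s + 1 - d * (s - 1)) * x := mul_pos (by linarith) hx
    have hs2x : s ^ 2 * x = β * γ * x := by rw [hs2]
    have hs2dx : s ^ 2 * (d * x) = β * γ * (d * x) := by rw [hs2]
    have h4 : d * (β * γ - 1) * x < (s + 1) ^ 2 * x := by
      nlinarith [mul_pos h3 (show (0:ℝ) < s + 1 by linarith)]
    have h5 : (s + 1) ^ 2 * x ≤ (β * x + 1) * (x + γ) := by nlinarith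
    linarith
  refine ⟨key, ?_⟩
  intro l hl xhat hxp hfix
  have hx1 : 0 < β * xhat + 1 := by positivity
  have hx2 : 0 < xhat + γ := by positivity
  have hu : 0 < (β * xhat + 1) / (xhat + γ) := div_pos hx1 hx2
  set u : ℝ := (β * xhat + 1) / (xhat + γ) with hudef
  have hueq : u * (xhat + γ) = β * xhat + 1 := div_mul_cancel₀ _ hx2.ne'
  have hnum : HasDerivAt (fun x : ℝ => β * x + 1) β xhat := by
    simpa using ((hasDerivAt_id xhat).const_mul β).add_const 1
  have hden : HasDerivAt (fun x : ℝ => x + γ) 1 xhat := (hasDerivAt_id xhat).add_const γ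
  have hud : HasDerivAt (fun x : ℝ => (β * x + 1) / (x + γ))
      ((β * (xhat + γ) - (β * xhat + 1) * 1) / (xhat + γ) ^ 2) xhat :=
    hnum.div hden hx2.ne'
  have hr : HasDerivAt (fun y : ℝ => y ^ d) (d * u ^ (d - 1)) u :=
    Real.hasDerivAt_rpow_const (Or.inl hu.ne')
  have hcomp : HasDerivAt (fun x : ℝ => ((β * x + 1) / (x + γ)) ^ d)
      (d * u ^ (d - 1) * ((β * (xhat + γ) - (β * xhat + 1) * 1) / (xhat + γ) ^ 2)) xhat :=
    by have h := hr.comp xhat hud; exact h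
  have hfull : HasDerivAt (fun x : ℝ => l * ((β * x + 1) / (x + γ)) ^ d)
      (l * (d * u ^ (d - 1) * ((β * (xhat + γ) - (β * xhat + 1) * 1) / (xhat + γ) ^ 2))) xhat :=
    hcomp.const_mul l
  rw [hfull.deriv]
  have hupow : u ^ (d - 1) = u ^ d / u := by
    rw [Real.rpow_sub hu, Real.rpow_one]
  clear hudef hud hcomp hfull hr
  clear_value u
  rw [hupow]
  have hC : β * (xhat + γ) - (β * xhat + 1) * 1 = β * γ - 1 := by ring
  rw [hC]
  have key2 : u * (xhat + γ) ^ 2 = (β * xhat + 1) * (xhat + γ) := by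
    rw [sq, ← mul_assoc, hueq]
  have step : l * (d * (u ^ d / u) * ((β * γ - 1) / (xhat + γ) ^ 2))
      = d * (l * u ^ d) * ((β * γ - 1) / (u * (xhat + γ) ^ 2)) := by
    have hune : u ≠ 0 := hu.ne'
    have hxne : xhat + γ ≠ 0 := hx2.ne'
    field_simp
  rw [step, hfix, key2]
  have hrw : d * xhat * ((β * γ - 1) / ((β * xhat + 1) * (xhat + γ)))
      = d * (β * γ - 1) * xhat / ((β * xhat + 1) * (xhat + γ)) := by ring
  rw [hrw, div_lt_one (by positivity)]
  exact key xhat hxp
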